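/- Let R(α) = −(1/η)·Σ_e d_e ((3+x_e)/6 · e^{−3ηα} + (3−x_e)/6 · e^{3ηα} − 1) with d_e ≥ 0, Σ_e d_e > 0, and x_e ∈ [−2,2] with Σ_e d_e x_e ≥ 0. Then the maximizer of R over ℝ is α* = (1/(6η))·ln(Σ_e d_e(3+x_e) / Σ_e d_e(3−x_e)), and α* ∈ [0, (1/(6η))·ln 5]. -/

import Mathlib

theorem stmt_10 {E : Type*} [Fintype E] (η : ℝ) (hη : 0 < η)
    (d x : E → ℝ) (hd : ∀ e, 0 ≤ d e) (hdpos : 0 < ∑ e, d e)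
    (hx : ∀ e, x e ∈ Set.Icc (-2 : ℝ) 2) (hb : 0 ≤ ∑ e, d e * x e)
    (R : ℝ → ℝ)
    (hR : R = fun α => -(1 / η) * ∑ e, d e *
      ((3 + x e) / 6 * Real.exp (-3 * η * α) +
        (3 - x e) / 6 * Real.exp (3 * η * α) - 1))
    (αstar : ℝ)
    (hαstar : αstar = (1 / (6 * η)) *
      Real.log ((∑ e, d e * (3 + x e)) / (∑ e, d e * (3 - x e)))) :
    (∀ α : ℝ, R α ≤ R αstar) ∧ 0 ≤ αstar ∧ αstar ≤ (1 / (6 * η)) * Real.log 5 := by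
  set P : ℝ := ∑ e, d e * (3 + x e) with hPdef
  set Q : ℝ := ∑ e, d e * (3 - x e) with hQdef
  set S : ℝ := ∑ e, d e with hSdef
  have hP : 0 < P := lt_of_lt_of_le hdpos (Finset.sum_le_sum fun e _ => by
    nlinarith [(hx e).1, hd e])
  have hQ : 0 < Q := lt_of_lt_of_le hdpos (Finset.sum_le_sum fun e _ => by
    nlinarith [(hx e).2, hd e])
  have hQP : Q ≤ P := by
    have h : P - Q = 2 * ∑ e, d e * x e := by
      rw [hPdef, hQdef, Finset.mul_sum, ← Finset.sum_sub_distrib]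
      exact Finset.sum_congr rfl fun e _ => by ring
    linarith
  have hP5Q : P ≤ 5 * Q := by
    have h : 5 * Q - P = ∑ e, d e * (12 - 6 * x e) := by
      rw [hPdef, hQdef, Finset.mul_sum, ← Finset.sum_sub_distrib]
      exact Finset.sum_congr rfl fun e _ => by ring
    have h2 : 0 ≤ ∑ e, d e * (12 - 6 * x e) :=
      Finset.sum_nonneg fun e _ => mul_nonneg (hd e) (by nlinarith [(hx e).2])
    linarith
  have hratio1 : 1 ≤ P / Q := (one_le_div hQ).mpr hQP
  have hratio5 : P / Q ≤ 5 := (div_le_iff₀ hQ).mpr (by linarith)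
  have hα0 : 0 ≤ αstar := by
    rw [hαstar]
    exact mul_nonneg (by positivity) (Real.log_nonneg hratio1)
  have hα5 : αstar ≤ (1 / (6 * η)) * Real.log 5 := by
    rw [hαstar]
    have : Real.log (P / Q) ≤ Real.log 5 := Real.log_le_log (by positivity) hratio5
    exact mul_le_mul_of_nonneg_left this (by positivity)
  refine ⟨?_, hα0, hα5⟩
  intro α
  have hsum : ∀ a b : ℝ, (∑ e, d e * ((3 + x e) / 6 * a + (3 - x e) / 6 * b - 1))
      = P / 6 * a + Q / 6 * b - S := by
    intro a b
    rw [hPdef, hQdef, hSdef]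
    calc (∑ e, d e * ((3 + x e) / 6 * a + (3 - x e) / 6 * b - 1))
        = ∑ e, (d e * (3 + x e) * (a / 6) + d e * (3 - x e) * (b / 6) - d e) :=
          Finset.sum_congr rfl fun e _ => by ring
      _ = (∑ e, d e * (3 + x e)) * (a / 6) + (∑ e, d e * (3 - x e)) * (b / 6)
          - ∑ e, d e := by
          rw [Finset.sum_sub_distrib, Finset.sum_add_distrib, ← Finset.sum_mul,
            ← Finset.sum_mul]
      _ = (∑ e, d e * (3 + x e)) / 6 * a + (∑ e, d e * (3 - x e)) / 6 * b
          - ∑ e, d e := by ring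
  have hRval : ∀ β : ℝ, R β = -(1 / η) *
      (P / 6 * Real.exp (-3 * η * β) + Q / 6 * Real.exp (3 * η * β) - S) := by
    intro β
    rw [hR]
    simp only
    rw [hsum]
  rw [hRval α, hRval αstar]
  have hexp_neg : ∀ β : ℝ, Real.exp (-3 * η * β) = (Real.exp (3 * η * β))⁻¹ := by
    intro β
    rw [← Real.exp_neg]
    ring_nf
  set s := Real.sqrt (P * Q) with hsdef
  have hs2 : s ^ 2 = P * Q := Real.sq_sqrt (by positivity)
  have hspos : 0 < s := Real.sqrt_pos.mpr (by positivity)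
  have hstar : P / 6 * Real.exp (-3 * η * αstar) + Q / 6 * Real.exp (3 * η * αstar)
      = s / 3 := by
    set v := Real.sqrt (P / Q) with hvdef
    have hvpos : 0 < v := Real.sqrt_pos.mpr (by positivity)
    have hv2 : v ^ 2 = P / Q := Real.sq_sqrt (by positivity)
    have hev : Real.exp (3 * η * αstar) = v := by
      rw [hαstar]
      have h3 : 3 * η * (1 / (6 * η) * Real.log (P / Q)) = Real.log (P / Q) / 2 := by
        field_simp
        ring
      rw [h3, ← Real.log_sqrt (by positivity), Real.exp_log hvpos]
    have hsv : s = Q * v := by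
      rw [hsdef, hvdef, show P * Q = Q ^ 2 * (P / Q) by field_simp,
        Real.sqrt_mul (by positivity), Real.sqrt_sq hQ.le]
    have hPv : P = Q * v ^ 2 := by
      rw [hv2]
      field_simp
    rw [hexp_neg, hev, hsv, hPv]
    field_simp
    ring
  rw [hstar]
  have key : s / 3 ≤ P / 6 * Real.exp (-3 * η * α) + Q / 6 * Real.exp (3 * η * α) := by
    rw [hexp_neg]
    set u := Real.exp (3 * η * α) with hudef
    have hupos : 0 < u := Real.exp_pos _
    have huinv : u * u⁻¹ = 1 := mul_inv_cancel₀ hupos.ne'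
    have h1 : 0 ≤ P + Q * u ^ 2 - 2 * s * u := by
      nlinarith [sq_nonneg (Q * u - s), hs2, hQ]
    have h2 : 0 ≤ u⁻¹ * (P + Q * u ^ 2 - 2 * s * u) :=
      mul_nonneg (inv_nonneg.mpr hupos.le) h1
    nlinarith [h2, huinv, hupos]
  have hpos : (0:ℝ) < 1 / η := by positivity
  nlinarith [mul_le_mul_of_nonneg_left key hpos.le]
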